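/- Let G be a connected graph with a cutvertex v. Then G has a maximal matching that is not a perfect matching. Equivalently, if every maximal matching of a connected graph G on an even number of vertices is perfect, then G has no cutvertex. -/

import Mathlib

open SimpleGraph

/-- A matching of a simple graph, given as a set of edges: each edge belongs to the
graph, and distinct edges of the matching share no vertex. -/
def EdgeMatching {V : Type*} (G : SimpleGraph V) (M : Set (Sym2 V)) : Prop :=
  M ⊆ G.edgeSet ∧ ∀ e ∈ M, ∀ f ∈ M, e ≠ f → ∀ v : V, v ∈ e → v ∉ f

/-- The set of vertices covered by a set of edges. -/
def mCover {V : Type*} (M : Set (Sym2 V)) : Set V := {v | ∃ e ∈ M, v ∈ e}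

/-- A maximal matching: a matching to which no edge of the graph can be added. -/
def MaximalEdgeMatching {V : Type*} (G : SimpleGraph V) (M : Set (Sym2 V)) : Prop :=
  EdgeMatching G M ∧ ∀ e ∈ G.edgeSet, EdgeMatching G (insert e M) → e ∈ M

/-- The spanning subgraph of `G` with all edges at `v` removed. -/
def avoidG (G : SimpleGraph V) (v : V) : SimpleGraph V where
  Adj x y := G.Adj x y ∧ x ≠ v ∧ y ≠ v
  symm := ⟨by rintro x y ⟨h, hx, hy⟩; exact ⟨h.symm, hy, hx⟩⟩
  loopless := ⟨fun x ⟨h, _, _⟩ => G.irrefl h⟩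

lemma avoidG_reach_induce (G : SimpleGraph V) (v : V) {a b : V}
    (h : (avoidG G v).Reachable a b) (ha : a ≠ v) (hb : b ≠ v) :
    (G.induce {x : V | x ≠ v}).Reachable ⟨a, ha⟩ ⟨b, hb⟩ := by
  obtain ⟨p⟩ := h
  induction p with
  | nil => rfl
  | @cons x y z h p ih =>
    have hy : y ≠ v := h.2.2
    have step : (G.induce {x : V | x ≠ v}).Adj ⟨x, ha⟩ ⟨y, hy⟩ := h.1
    exact step.reachable.trans (ih hy hb)

lemma exists_avoid_neighbor (G : SimpleGraph V) (v : V) {x w : V}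
    (p : G.Walk x w) (hw : w = v) (hx : x ≠ v) :
    ∃ u, G.Adj v u ∧ u ≠ v ∧ (avoidG G v).Reachable x u := by
  induction p with
  | nil => exact absurd hw hx
  | @cons c d w h p ih =>
    by_cases hd : d = v
    · subst hw; subst hd
      exact ⟨c, h.symm, hx, Reachable.refl _⟩
    · obtain ⟨u, h1, h2, h3⟩ := ih hw hd
      have step : (avoidG G v).Adj c d := ⟨h, hx, hd⟩
      exact ⟨u, h1, h2, step.reachable.trans h3⟩

lemma mCover_card {V : Type*} [Fintype V] [DecidableEq (Sym2 V)] (G : SimpleGraph V)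
    (N : Finset (Sym2 V)) (hsub : ↑N ⊆ G.edgeSet)
    (hdisj : ∀ e ∈ N, ∀ f ∈ N, e ≠ f → ∀ v : V, v ∈ e → v ∉ f) :
    (mCover (↑N : Set (Sym2 V))).ncard = 2 * N.card := by
  induction N using Finset.induction_on with
  | empty => simp [mCover]
  | @insert e N he ih =>
    have hsub' : (↑N : Set (Sym2 V)) ⊆ G.edgeSet := by
      intro f hf; exact hsub (by simp [hf])
    have hdisj' : ∀ e ∈ N, ∀ f ∈ N, e ≠ f → ∀ v : V, v ∈ e → v ∉ f := by
      intro a ha b hb hab w hw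
      exact hdisj a (by simp [ha]) b (by simp [hb]) hab w hw
    have heq : mCover (↑(insert e N) : Set (Sym2 V)) =
        {x | x ∈ e} ∪ mCover (↑N : Set (Sym2 V)) := by
      ext w; simp [mCover, or_comm]
    have hd : Disjoint {x | x ∈ e} (mCover (↑N : Set (Sym2 V))) := by
      rw [Set.disjoint_left]
      rintro w hw ⟨f, hf, hwf⟩
      exact hdisj e (by simp) f (by simp; right; exact hf) (by rintro rfl; exact he hf) w hw hwf
    have hedge : e ∈ G.edgeSet := hsub (by simp)
    obtain ⟨a, b⟩ := e
    have hab : a ≠ b := (G.mem_edgeSet.mp hedge).ne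
    have hset : {x | x ∈ s(a,b)} = ({a, b} : Set V) := by
      ext w; simp [Sym2.mem_iff]
    rw [heq, Set.ncard_union_eq hd (by rw [hset]; exact (Set.toFinite _)) (Set.toFinite _),
      hset, Set.ncard_pair hab, ih hsub' hdisj', Finset.card_insert_of_notMem he]
    ring

lemma main_construction {V : Type*} [Fintype V] (G : SimpleGraph V) (v u : V) (X Y : Set V)
    (hvX : v ∉ X) (hdisj : Disjoint X Y)
    (huY : u ∈ Y) (hadj : G.Adj v u)
    (hedge : ∀ e ∈ G.edgeSet, v ∉ e → (∀ w ∈ e, w ∈ X) ∨ (∀ w ∈ e, w ∈ Y))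
    (hodd : Odd X.ncard ∨ Odd (({v} : Set V) ∪ Y).ncard) :
    ∃ M : Set (Sym2 V), MaximalEdgeMatching G M ∧ mCover M ≠ Set.univ := by
  classical
  set e0 : Sym2 V := s(v, u) with he0
  have he0E : e0 ∈ G.edgeSet := G.mem_edgeSet.mpr hadj
  have hvu : v ≠ u := hadj.ne
  have hm0 : EdgeMatching G (↑({e0} : Finset (Sym2 V))) := by
    constructor
    · intro f hf; simp at hf; subst hf; exact he0E
    · intro e he f hf hef; simp at he hf; subst he; subst hf; exact absurd rfl hef
  obtain ⟨N, hN, hmax⟩ := Finset.exists_max_image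
    (Finset.univ.filter (fun N : Finset (Sym2 V) => EdgeMatching G ↑N ∧ e0 ∈ N))
    Finset.card ⟨{e0}, by
      simp only [Finset.mem_filter]
      exact ⟨Finset.mem_univ _, by exact_mod_cast hm0, Finset.mem_singleton_self _⟩⟩
  rw [Finset.mem_filter] at hN
  obtain ⟨-, hNM, hNe0⟩ := hN
  refine ⟨↑N, ⟨hNM, ?_⟩, ?_⟩
  · -- maximality
    intro f hf hins
    by_contra hfN
    have hfN' : f ∉ N := fun h => hfN (by exact_mod_cast h)
    have : (insert f N).card ≤ N.card := by
      apply hmax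
      rw [Finset.mem_filter]
      refine ⟨Finset.mem_univ _, ?_, by simp [hNe0]⟩
      rw [Finset.coe_insert]
      exact hins
    rw [Finset.card_insert_of_notMem hfN'] at this
    omega
  · -- not perfect
    intro hcov
    have hve0 : v ∈ e0 := by simp [he0]
    have hue0 : u ∈ e0 := by simp [he0]
    -- edges other than e0 avoid v
    have hav : ∀ e ∈ N, e ≠ e0 → v ∉ e :=
      fun e he hne hv => hNM.2 e0 (by exact_mod_cast hNe0) e (by exact_mod_cast he)
        (Ne.symm hne) v hve0 hv
    have hsubmatch : ∀ (P : Sym2 V → Prop) [DecidablePred P],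
        ↑(N.filter P) ⊆ G.edgeSet ∧
        ∀ e ∈ N.filter P, ∀ f ∈ N.filter P, e ≠ f → ∀ w : V, w ∈ e → w ∉ f := by
      intro P _
      constructor
      · intro e he
        simp only [Finset.coe_filter, Set.mem_setOf_eq] at he
        exact hNM.1 (by exact_mod_cast he.1)
      · intro e he f hf hef w hw
        rw [Finset.mem_filter] at he hf
        exact hNM.2 e (by exact_mod_cast he.1) f (by exact_mod_cast hf.1) hef w hw
    -- covered vertices lie in univ; trace on X
    have hcovN : ∀ w : V, ∃ e ∈ N, w ∈ e := by
      intro w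
      have : w ∈ mCover (↑N : Set (Sym2 V)) := by rw [hcov]; trivial
      obtain ⟨e, he, hwe⟩ := this
      exact ⟨e, by exact_mod_cast he, hwe⟩
    have hX : mCover (↑(N.filter (fun e => ∀ w ∈ e, w ∈ X)) : Set (Sym2 V)) = X := by
      apply Set.eq_of_subset_of_subset
      · rintro w ⟨e, he, hwe⟩
        simp only [Finset.coe_filter, Set.mem_setOf_eq] at he
        exact he.2 w hwe
      · intro w hwX
        obtain ⟨e, heN, hwe⟩ := hcovN w
        have hne : e ≠ e0 := by
          rintro rfl
          rcases (Sym2.mem_iff.mp hwe) with rfl | rfl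
          · exact hvX hwX
          · exact (Set.disjoint_left.mp hdisj hwX) huY
        have hvne : v ∉ e := hav e heN hne
        rcases hedge e (hNM.1 (by exact_mod_cast heN)) hvne with hIn | hIn
        · exact ⟨e, by rw [Finset.mem_coe, Finset.mem_filter]; exact ⟨heN, hIn⟩, hwe⟩
        · exact absurd (hIn w hwe) (Set.disjoint_left.mp hdisj hwX)
    have hY : mCover (↑(N.filter (fun e => ∀ w ∈ e, w ∈ ({v} : Set V) ∪ Y)) : Set (Sym2 V))
        = ({v} : Set V) ∪ Y := by
      apply Set.eq_of_subset_of_subset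
      · rintro w ⟨e, he, hwe⟩
        simp only [Finset.coe_filter, Set.mem_setOf_eq] at he
        exact he.2 w hwe
      · intro w hwY
        obtain ⟨e, heN, hwe⟩ := hcovN w
        have hIn : ∀ x ∈ e, x ∈ ({v} : Set V) ∪ Y := by
          by_cases hne : e = e0
          · subst hne
            intro x hx
            rcases Sym2.mem_iff.mp hx with rfl | rfl
            · exact Or.inl rfl
            · exact Or.inr huY
          · have hvne : v ∉ e := hav e heN hne
            have hwY' : w ∈ Y := by
              rcases hwY with rfl | h
              · exact absurd hwe hvne
              · exact h
            rcases hedge e (hNM.1 (by exact_mod_cast heN)) hvne with hIn | hIn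
            · exact absurd hwY' (Set.disjoint_left.mp hdisj (hIn w hwe))
            · exact fun x hx => Or.inr (hIn x hx)
        exact ⟨e, by rw [Finset.mem_coe, Finset.mem_filter]; exact ⟨heN, hIn⟩, hwe⟩
    have hXeven : Even X.ncard := by
      rw [← hX]
      obtain ⟨h1, h2⟩ := hsubmatch (fun e => ∀ w ∈ e, w ∈ X)
      rw [mCover_card G _ h1 h2]
      exact even_two_mul _
    have hYeven : Even (({v} : Set V) ∪ Y).ncard := by
      rw [← hY]
      obtain ⟨h1, h2⟩ := hsubmatch (fun e => ∀ w ∈ e, w ∈ ({v} : Set V) ∪ Y)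
      rw [mCover_card G _ h1 h2]
      exact even_two_mul _
    rcases hodd with h | h
    · exact (Nat.not_even_iff_odd.mpr h) hXeven
    · exact (Nat.not_even_iff_odd.mpr h) hYeven

/-- a connected graph (on at least 3 vertices) with a cutvertex has
a maximal matching that is not perfect. -/
theorem exists_nonperfect_maximal_matching_of_cutvertex {V : Type*} [Fintype V]
    (G : SimpleGraph V) (hcard : 3 ≤ Fintype.card V) (hconn : G.Connected)
    (v : V) (hcut : ¬ (G.induce {x : V | x ≠ v}).Connected) :
    ∃ M : Set (Sym2 V), MaximalEdgeMatching G M ∧ mCover M ≠ Set.univ := by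
  classical
  obtain ⟨a0, ha0⟩ := Fintype.exists_ne_of_one_lt_card (by omega) v
  have hne : Nonempty {x : V | x ≠ v} := ⟨⟨a0, ha0⟩⟩
  rw [connected_iff] at hcut
  have hnp : ¬ (G.induce {x : V | x ≠ v}).Preconnected := fun h => hcut ⟨h, hne⟩
  rw [SimpleGraph.Preconnected] at hnp
  push_neg at hnp
  obtain ⟨⟨a, ha⟩, ⟨b, hb⟩, hnab⟩ := hnp
  have ha : a ≠ v := ha
  have hb : b ≠ v := hb
  have hab' : ¬ (avoidG G v).Reachable a b := fun h => hnab (avoidG_reach_induce G v h ha hb)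
  set C : Set V := {x | x ≠ v ∧ (avoidG G v).Reachable a x} with hC
  set D : Set V := {x | x ≠ v ∧ ¬ (avoidG G v).Reachable a x} with hD
  obtain ⟨ua, hua1, hua2, hua3⟩ := exists_avoid_neighbor G v ((hconn.preconnected a v).some) rfl ha
  obtain ⟨ub, hub1, hub2, hub3⟩ := exists_avoid_neighbor G v ((hconn.preconnected b v).some) rfl hb
  have huaC : ua ∈ C := ⟨hua2, hua3⟩
  have hubD : ub ∈ D := ⟨hub2, fun h => hab' (h.trans hub3.symm)⟩
  have hdisj : Disjoint C D := by
    rw [Set.disjoint_left]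
    rintro x ⟨-, h⟩ ⟨-, h'⟩
    exact h' h
  have hvC : v ∉ C := fun h => h.1 rfl
  have hvD : v ∉ D := fun h => h.1 rfl
  have hedge : ∀ e ∈ G.edgeSet, v ∉ e → (∀ w ∈ e, w ∈ C) ∨ (∀ w ∈ e, w ∈ D) := by
    rintro ⟨x, y⟩ he hv
    have hxy : G.Adj x y := G.mem_edgeSet.mp he
    have hxv : x ≠ v := fun h => hv (Sym2.mem_iff.mpr (Or.inl h.symm))
    have hyv : y ≠ v := fun h => hv (Sym2.mem_iff.mpr (Or.inr h.symm))
    have step : (avoidG G v).Adj x y := ⟨hxy, hxv, hyv⟩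
    by_cases hxC : (avoidG G v).Reachable a x
    · left
      intro w hw
      rcases Sym2.mem_iff.mp hw with rfl | rfl
      · exact ⟨hxv, hxC⟩
      · exact ⟨hyv, hxC.trans step.reachable⟩
    · right
      intro w hw
      rcases Sym2.mem_iff.mp hw with rfl | rfl
      · exact ⟨hxv, hxC⟩
      · exact ⟨hyv, fun h => hxC (h.trans step.reachable.symm)⟩
  by_cases hoddC : Odd C.ncard
  · exact main_construction G v ub C D hvC hdisj hubD hub1 hedge (Or.inl hoddC)
  · refine main_construction G v ua D C hvD hdisj.symm huaC hua1
      (fun e he hv => (hedge e he hv).symm) (Or.inr ?_)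
    have h1 : ({v} : Set V) ∪ C = insert v C := (Set.insert_eq v C).symm
    rw [h1, Set.ncard_insert_of_notMem hvC C.toFinite]
    rw [Nat.not_odd_iff_even] at hoddC
    exact hoddC.add_one
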